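/- Let (μ_n) be a sequence of nonnegative real numbers satisfying μ_{n+1} ≤ (1 − φ_n) μ_n + φ_n ε_n for all n, where (φ_n) is a sequence in [0,1] with Σ_{n=1}^∞ φ_n = ∞ and (ε_n) is a real sequence with limsup_{n→∞} ε_n ≤ 0. Then lim_{n→∞} μ_n = 0. -/

import Mathlib

open Filter Topology

/-- the standard convergence lemma for numerical sequences
`μ_{n+1} ≤ (1 - φ_n) μ_n + φ_n ε_n` with `Σ φ_n = ∞` and `limsup ε_n ≤ 0`. -/
theorem tendsto_zero_of_recursive_inequality_limsup
    (μ φ ε : ℕ → ℝ)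
    (hμ : ∀ n, 0 ≤ μ n)
    (hφ : ∀ n, φ n ∈ Set.Icc (0:ℝ) 1)
    (hsum : ¬ Summable φ)
    (hrec : ∀ n, μ (n + 1) ≤ (1 - φ n) * μ n + φ n * ε n)
    (hε : limsup (fun n => (ε n : EReal)) atTop ≤ 0) :
    Tendsto μ atTop (𝓝 0) := by
  have hφ0 : ∀ n, 0 ≤ φ n := fun n => (hφ n).1
  have hφ1 : ∀ n, φ n ≤ 1 := fun n => (hφ n).2
  rw [Metric.tendsto_atTop]
  intro d hd
  set δ := d / 3 with hδdef
  have hδ : 0 < δ := by positivity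
  -- eventually ε n ≤ δ
  have hev : ∀ᶠ n in atTop, ε n ≤ δ := by
    have h1 : limsup (fun n => (ε n : EReal)) atTop < (δ : EReal) :=
      lt_of_le_of_lt hε (by exact_mod_cast hδ)
    filter_upwards [Filter.eventually_lt_of_limsup_lt h1] with n hn
    exact_mod_cast hn.le
  obtain ⟨N, hN⟩ := eventually_atTop.1 hev
  -- key inequality
  have key : ∀ n, N ≤ n → μ n ≤ δ + (∏ k ∈ Finset.Ico N n, (1 - φ k)) * μ N := by
    intro n hn
    induction n, hn using Nat.le_induction with
    | base => simp [le_of_lt hδ]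
    | succ n hn ih =>
      have h1 : μ (n + 1) ≤ (1 - φ n) * μ n + φ n * δ := by
        calc μ (n + 1) ≤ (1 - φ n) * μ n + φ n * ε n := hrec n
          _ ≤ (1 - φ n) * μ n + φ n * δ :=
              add_le_add le_rfl (mul_le_mul_of_nonneg_left (hN n hn) (hφ0 n))
      have h2 : (1 - φ n) * μ n ≤ (1 - φ n) * (δ + (∏ k ∈ Finset.Ico N n, (1 - φ k)) * μ N) := by
        have : 0 ≤ 1 - φ n := by linarith [hφ1 n]
        exact mul_le_mul_of_nonneg_left ih this
      rw [Finset.prod_Ico_succ_top hn]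
      nlinarith [hφ0 n, hφ1 n]
  -- the product tends to 0
  have hsum' : Tendsto (fun n => ∑ k ∈ Finset.range n, φ k) atTop atTop :=
    (not_summable_iff_tendsto_nat_atTop_of_nonneg hφ0).1 hsum
  have hsumIco : Tendsto (fun n => ∑ k ∈ Finset.Ico N n, φ k) atTop atTop := by
    apply Tendsto.congr' (f₁ := fun n => ∑ k ∈ Finset.range n, φ k - ∑ k ∈ Finset.range N, φ k)
    · filter_upwards [eventually_ge_atTop N] with n hn
      rw [Finset.sum_Ico_eq_sub _ hn]
    · exact hsum'.atTop_add tendsto_const_nhds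
  have hprod : Tendsto (fun n => ∏ k ∈ Finset.Ico N n, (1 - φ k)) atTop (𝓝 0) := by
    have hub : ∀ n, (∏ k ∈ Finset.Ico N n, (1 - φ k)) ≤ Real.exp (-(∑ k ∈ Finset.Ico N n, φ k)) := by
      intro n
      rw [← Finset.sum_neg_distrib, Real.exp_sum]
      apply Finset.prod_le_prod
      · intro i _; linarith [hφ1 i]
      · intro i _
        have := Real.add_one_le_exp (-(φ i))
        simpa using by linarith [this]
    have hlb : ∀ n, (0:ℝ) ≤ ∏ k ∈ Finset.Ico N n, (1 - φ k) := by
      intro n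
      apply Finset.prod_nonneg
      intro i _; linarith [hφ1 i]
    have hexp : Tendsto (fun n => Real.exp (-(∑ k ∈ Finset.Ico N n, φ k))) atTop (𝓝 0) :=
      Real.tendsto_exp_atBot.comp (tendsto_neg_atBot_iff.2 hsumIco)
    exact squeeze_zero hlb hub hexp
  have hmul : Tendsto (fun n => (∏ k ∈ Finset.Ico N n, (1 - φ k)) * μ N) atTop (𝓝 0) := by
    simpa using hprod.mul_const (μ N)
  have hev2 : ∀ᶠ n in atTop, (∏ k ∈ Finset.Ico N n, (1 - φ k)) * μ N < δ := by
    have := hmul.eventually_lt_const hδ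
    simpa using this
  rw [eventually_atTop] at hev2
  obtain ⟨M, hM⟩ := hev2
  refine ⟨max N M, fun n hn => ?_⟩
  have h1 : μ n ≤ δ + (∏ k ∈ Finset.Ico N n, (1 - φ k)) * μ N :=
    key n (le_trans (le_max_left _ _) hn)
  have h2 := hM n (le_trans (le_max_right _ _) hn)
  rw [Real.dist_eq, sub_zero, abs_of_nonneg (hμ n)]
  have : μ n < 2 * δ := by linarith
  linarith
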